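/- For α ∈ [1,∞], the Arimoto conditional entropy H_α(X|T) satisfies ((γ−1)/γ) H_γ(X|T) ≤ H_∞(X|T) ≤ H_γ(X|T) for all γ > 1. -/

import Mathlib

open Real BigOperators

namespace BN

variable {α β γ : Type*}

section Finite
variable [Fintype α] [Fintype β] [Fintype γ]

/-- `q` is a probability mass function on a finite alphabet. -/
def IsPMF (q : α → ℝ) : Prop := (∀ a, 0 ≤ q a) ∧ (∑ a, q a) = 1

/-- `p` is a joint probability mass function. -/
def IsJointPMF (p : α → β → ℝ) : Prop :=
  (∀ a b, 0 ≤ p a b) ∧ (∑ a, ∑ b, p a b) = 1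

/-- `k` is a channel (conditional distribution) from `α` to `γ`. -/
def IsChannel (k : α → γ → ℝ) : Prop :=
  (∀ a c, 0 ≤ k a c) ∧ ∀ a, (∑ c, k a c) = 1

/-- first marginal of a joint pmf -/
def fstM (p : α → β → ℝ) (a : α) : ℝ := ∑ b, p a b

/-- second marginal of a joint pmf -/
def sndM (p : α → β → ℝ) (b : β) : ℝ := ∑ a, p a b

/-- Shannon mutual information (in nats) of a joint pmf. -/
noncomputable def mi (p : α → β → ℝ) : ℝ :=
  ∑ a, ∑ b, p a b * Real.log (p a b / (fstM p a * sndM p b))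

/-- Shannon entropy (in nats). -/
noncomputable def ent (q : α → ℝ) : ℝ := -∑ a, q a * Real.log (q a)

/-- conditional entropy H(X|Y) of the first coordinate given the second. -/
noncomputable def condEnt (p : α → β → ℝ) : ℝ :=
  -∑ a, ∑ b, p a b * Real.log (p a b / sndM p b)

/-- Joint pmf of (X,T) when T is generated from X via channel `k`,
so Y ⊸ X ⊸ T is a Markov chain. -/
noncomputable def jXT (p : α → β → ℝ) (k : α → γ → ℝ) : α → γ → ℝ :=
  fun a c => fstM p a * k a c

/-- Joint pmf of (Y,T) under the Markov chain Y ⊸ X ⊸ T. -/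
noncomputable def jYT (p : α → β → ℝ) (k : α → γ → ℝ) : β → γ → ℝ :=
  fun b c => ∑ a, p a b * k a c

/-- I(X;T) under the Markov chain Y ⊸ X ⊸ T. -/
noncomputable def miXT (p : α → β → ℝ) (k : α → γ → ℝ) : ℝ := mi (jXT p k)

/-- I(Y;T) under the Markov chain Y ⊸ X ⊸ T. -/
noncomputable def miYT (p : α → β → ℝ) (k : α → γ → ℝ) : ℝ := mi (jYT p k)

/-- The information bottleneck function. -/
noncomputable def IB (p : α → β → ℝ) (R : ℝ) : ℝ :=
  sSup {v | ∃ (n : ℕ) (k : α → Fin n → ℝ),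
    IsChannel k ∧ miXT p k ≤ R ∧ v = miYT p k}

/-- The privacy funnel function. -/
noncomputable def PF (p : α → β → ℝ) (r : ℝ) : ℝ :=
  sInf {v | ∃ (n : ℕ) (k : α → Fin n → ℝ),
    IsChannel k ∧ r ≤ miXT p k ∧ v = miYT p k}

end Finite

end BN

namespace BN

/-- Arimoto conditional entropy `H_γ(X|T)` of the first coordinate given the
second, for a joint pmf `p` of `(X,T)`:
`H_γ(X|T) = (γ/(1−γ)) log Σ_t (Σ_x p(x,t)^γ)^{1/γ}`. -/
noncomputable def arimotoCondEnt {α β : Type*} [Fintype α] [Fintype β]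
    (g : ℝ) (p : α → β → ℝ) : ℝ :=
  (g / (1 - g)) * Real.log (∑ b, (∑ a, p a b ^ g) ^ (1 / g))

/-- Arimoto conditional min-entropy `H_∞(X|T) = −log Σ_t max_x p(x,t)`. -/
noncomputable def minCondEnt {α β : Type*} [Fintype α] [Fintype β] [Nonempty α]
    (p : α → β → ℝ) : ℝ :=
  -Real.log (∑ b, ⨆ a, p a b)

/-- `((γ−1)/γ)·H_γ(X|T) ≤ H_∞(X|T) ≤ H_γ(X|T)` for all `γ > 1`. -/
theorem arimoto_sandwich {α β : Type*} [Fintype α] [Fintype β] [Nonempty α]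
    (p : α → β → ℝ) (hp : IsJointPMF p) (g : ℝ) (hg : 1 < g) :
    (g - 1) / g * arimotoCondEnt g p ≤ minCondEnt p ∧
      minCondEnt p ≤ arimotoCondEnt g p := by
  obtain ⟨hnn, hsum⟩ := hp
  simp only [arimotoCondEnt, minCondEnt]
  have hg0 : (0:ℝ) < g := by linarith
  set A : β → ℝ := fun b => ⨆ a, p a b with hA
  set B : β → ℝ := fun b => ∑ a, p a b with hB
  have hle : ∀ a b, p a b ≤ A b := fun a b =>
    le_ciSup (f := fun a => p a b) (Finite.bddAbove_range _) a
  have hAnn : ∀ b, 0 ≤ A b := fun b =>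
    le_trans (hnn (Classical.arbitrary α) b) (hle _ b)
  have hBnn : ∀ b, 0 ≤ B b := fun b => Finset.sum_nonneg fun a _ => hnn a b
  have hBsum : (∑ b, B b) = 1 := by rw [← hsum]; exact Finset.sum_comm
  set M : ℝ := ∑ b, A b with hM
  set S : ℝ := ∑ b, (∑ a, p a b ^ g) ^ (1 / g) with hS
  have hex : ∃ a b, 0 < p a b := by
    by_contra h
    push_neg at h
    have : ∀ a b, p a b = 0 := fun a b => le_antisymm (h a b) (hnn a b)
    simp [this] at hsum
  obtain ⟨a0, b0, hab0⟩ := hex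
  have hM0 : 0 < M := by
    apply Finset.sum_pos' (fun b _ => hAnn b)
    exact ⟨b0, Finset.mem_univ _, lt_of_lt_of_le hab0 (hle a0 b0)⟩
  -- M ≤ S
  have hMS : M ≤ S := by
    apply Finset.sum_le_sum
    intro b _
    refine ciSup_le fun a => ?_
    have h1 : p a b = (p a b ^ g) ^ (1 / g) := by
      rw [← Real.rpow_mul (hnn a b), mul_one_div_cancel hg0.ne', Real.rpow_one]
    rw [h1]
    apply Real.rpow_le_rpow (Real.rpow_nonneg (hnn a b) g)
    · exact Finset.single_le_sum (fun a _ => Real.rpow_nonneg (hnn a b) g) (Finset.mem_univ a)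
    · positivity
  -- S ≤ M ^ ((g-1)/g)
  have hSM : S ≤ M ^ ((g - 1) / g) := by
    have step1 : ∀ b, (∑ a, p a b ^ g) ^ (1 / g) ≤ A b ^ ((g - 1) / g) * B b ^ (1 / g) := by
      intro b
      have h2 : (∑ a, p a b ^ g) ≤ A b ^ (g - 1) * B b := by
        rw [hB, Finset.mul_sum]
        apply Finset.sum_le_sum
        intro a _
        have h3 : p a b ^ g = p a b ^ (g - 1) * p a b := by
          rcases eq_or_lt_of_le (hnn a b) with h | h
          · rw [← h, Real.zero_rpow hg0.ne', Real.zero_rpow (by linarith : g - 1 ≠ 0), zero_mul]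
          · rw [← Real.rpow_add_one h.ne', sub_add_cancel]
        rw [h3]
        exact mul_le_mul_of_nonneg_right
          (Real.rpow_le_rpow (hnn a b) (hle a b) (by linarith)) (hnn a b)
      calc (∑ a, p a b ^ g) ^ (1 / g)
          ≤ (A b ^ (g - 1) * B b) ^ (1 / g) :=
            Real.rpow_le_rpow (Finset.sum_nonneg fun a _ => Real.rpow_nonneg (hnn a b) g)
              h2 (by positivity)
        _ = A b ^ ((g - 1) / g) * B b ^ (1 / g) := by
            rw [Real.mul_rpow (Real.rpow_nonneg (hAnn b) _) (hBnn b),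
              ← Real.rpow_mul (hAnn b)]
            ring_nf
    have hpq : Real.HolderConjugate (g / (g - 1)) g := by
      exact ((Real.holderConjugate_iff_eq_conjExponent hg).2 rfl).symm
    have hold := Real.inner_le_Lp_mul_Lq (s := Finset.univ)
      (fun b => A b ^ ((g - 1) / g)) (fun b => B b ^ (1 / g)) hpq
    have e1 : ∀ b, |A b ^ ((g - 1) / g)| ^ (g / (g - 1)) = A b := by
      intro b
      rw [abs_of_nonneg (Real.rpow_nonneg (hAnn b) _), ← Real.rpow_mul (hAnn b),
        div_mul_div_comm, mul_comm (g - 1) g,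
        div_self (mul_pos hg0 (by linarith : (0:ℝ) < g - 1)).ne', Real.rpow_one]
    have e2 : ∀ b, |B b ^ (1 / g)| ^ g = B b := by
      intro b
      rw [abs_of_nonneg (Real.rpow_nonneg (hBnn b) _), ← Real.rpow_mul (hBnn b),
        one_div_mul_cancel hg0.ne', Real.rpow_one]
    simp only [e1, e2] at hold
    rw [hBsum, one_div_div, Real.one_rpow, mul_one] at hold
    calc S ≤ ∑ b, A b ^ ((g - 1) / g) * B b ^ (1 / g) :=
          Finset.sum_le_sum fun b _ => step1 b
      _ ≤ M ^ ((g - 1) / g) := hold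
  have hSpos : 0 < S := lt_of_lt_of_le hM0 hMS
  have hlog1 : Real.log M ≤ Real.log S := Real.log_le_log hM0 hMS
  have hlog2 : Real.log S ≤ (g - 1) / g * Real.log M := by
    rw [← Real.log_rpow hM0]
    exact Real.log_le_log hSpos hSM
  have hc : (g - 1) / g * (g / (1 - g)) = -1 := by
    rw [div_mul_div_comm, div_eq_iff (by nlinarith : g * (1 - g) ≠ 0)]
    ring
  constructor
  · rw [← mul_assoc, hc, neg_one_mul]
    exact neg_le_neg hlog1
  · have hneg : g / (1 - g) < 0 := div_neg_of_pos_of_neg hg0 (by linarith)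
    have h4 := mul_le_mul_of_nonpos_left hlog2 hneg.le
    rw [← mul_assoc, mul_comm (g / (1 - g)) ((g - 1) / g), hc, neg_one_mul] at h4
    exact h4

end BN
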